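/- Let g : [0,∞) → ℂ be integrable with compact support, and suppose its Laplace transform ĝ(z) = ∫₀^∞ e^{-zr} g(r) dr vanishes at the points Z_s = √s/√2 − i√s/√2 for all s ≥ M₀ (some M₀ > 0). Then g = 0 almost everywhere. -/

import Mathlib

open MeasureTheory Set

open Complex Filter Metric
open scoped FourierTransform Topology SchwartzMap Real ContDiff

-- Schwartz map from a smooth compactly supported real function
lemma exists_schwartz_of_compact_support (φ : ℝ → ℝ) (h1 : ContDiff ℝ ∞ φ)
    (h2 : HasCompactSupport φ) : ∃ Φ : 𝓢(ℝ, ℂ), ∀ x, Φ x = (φ x : ℂ) := by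
  have hsm : ContDiff ℝ ∞ (fun x : ℝ => (φ x : ℂ)) :=
    Complex.ofRealCLM.contDiff.comp h1
  have hcs : HasCompactSupport (fun x : ℝ => (φ x : ℂ)) :=
    h2.comp_left (g := fun r : ℝ => (r : ℂ)) (by simp)
  refine ⟨⟨fun x => (φ x : ℂ), hsm, ?_⟩, fun x => rfl⟩
  intro k n
  have hD : HasCompactSupport (iteratedFDeriv ℝ n (fun x : ℝ => (φ x : ℂ))) :=
    hcs.iteratedFDeriv n
  have hcont : Continuous (fun x : ℝ => ‖x‖ ^ k * ‖iteratedFDeriv ℝ n (fun x : ℝ => (φ x : ℂ)) x‖) := by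
    apply Continuous.mul (by fun_prop)
    exact (hsm.continuous_iteratedFDeriv (by exact_mod_cast le_top)).norm
  have hcs2 : HasCompactSupport
      (fun x : ℝ => ‖x‖ ^ k * ‖iteratedFDeriv ℝ n (fun x : ℝ => (φ x : ℂ)) x‖) := by
    apply HasCompactSupport.mul_left
    exact hD.norm
  obtain ⟨C, hC⟩ := hcs2.exists_bound_of_continuous hcont
  exact ⟨C, fun x => (Real.le_norm_self _).trans (hC x)⟩

lemma laplace_differentiable (f : ℝ → ℂ) (hf : Integrable f) (R : ℝ)
    (hR : ∀ x, f x ≠ 0 → |x| ≤ R) :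
    Differentiable ℂ (fun z => ∫ x : ℝ, Complex.exp ((↑(-x)) * z) * f x) := by
  have hnorm : ∀ (x : ℝ) (z : ℂ), ‖Complex.exp ((↑(-x) : ℂ) * z)‖ = Real.exp (-x * z.re) := by
    intro x z
    rw [Complex.norm_exp]
    congr 1
    simp [Complex.mul_re]
  intro z₀
  have hexp_le : ∀ (x : ℝ) (z : ℂ), f x ≠ 0 → ‖z‖ ≤ ‖z₀‖ + 1 →
      Real.exp (-x * z.re) ≤ Real.exp ((‖z₀‖ + 1) * |R|) := by
    intro x z hx hz
    apply Real.exp_le_exp.2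
    calc -x * z.re ≤ |(-x) * z.re| := le_abs_self _
      _ = |x| * |z.re| := by rw [abs_mul, abs_neg]
      _ ≤ |R| * (‖z₀‖ + 1) := by
          refine mul_le_mul ((hR x hx).trans (le_abs_self R)) ?_ (abs_nonneg _) (abs_nonneg _)
          exact (Complex.abs_re_le_norm z).trans (by assumption)
      _ = (‖z₀‖ + 1) * |R| := mul_comm _ _
  have key := hasDerivAt_integral_of_dominated_loc_of_deriv_le (μ := volume)
    (F := fun z x => Complex.exp ((↑(-x) : ℂ) * z) * f x)
    (F' := fun z x => Complex.exp ((↑(-x) : ℂ) * z) * (↑(-x) : ℂ) * f x)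
    (x₀ := z₀) (bound := fun x => (|R| * Real.exp ((‖z₀‖ + 1) * |R|)) * ‖f x‖)
    (ball_mem_nhds z₀ one_pos)
    (Eventually.of_forall fun z =>
      (Continuous.aestronglyMeasurable (by fun_prop)).mul hf.1)
    ?_
    ((Continuous.aestronglyMeasurable (by fun_prop)).mul hf.1)
    ?_
    ((hf.norm.const_mul _))
    ?_
  · exact key.2.differentiableAt
  · -- integrability of F z₀
    apply (hf.norm.const_mul (Real.exp ((‖z₀‖ + 1) * |R|))).mono'
      ((Continuous.aestronglyMeasurable (by fun_prop)).mul hf.1)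
    filter_upwards with x
    simp only [Pi.mul_apply]
    by_cases hx : f x = 0
    · simp [hx]
    · rw [norm_mul, hnorm]
      exact mul_le_mul_of_nonneg_right (hexp_le x z₀ hx (by linarith)) (norm_nonneg _)
  · -- bound
    filter_upwards with x z hz
    by_cases hx : f x = 0
    · simp [hx]
    · rw [norm_mul, norm_mul, hnorm]
      have hzn : ‖z‖ ≤ ‖z₀‖ + 1 := by
        have := mem_ball_iff_norm.1 hz
        calc ‖z‖ = ‖z₀ + (z - z₀)‖ := by ring_nf
          _ ≤ ‖z₀‖ + ‖z - z₀‖ := norm_add_le _ _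
          _ ≤ ‖z₀‖ + 1 := by linarith
      have h1 : ‖((-x : ℝ) : ℂ)‖ ≤ |R| := by
        rw [Complex.norm_real, Real.norm_eq_abs, abs_neg]
        exact (hR x hx).trans (le_abs_self R)
      calc Real.exp (-x * z.re) * ‖((-x : ℝ) : ℂ)‖ * ‖f x‖
          ≤ Real.exp ((‖z₀‖ + 1) * |R|) * |R| * ‖f x‖ := by
            apply mul_le_mul_of_nonneg_right _ (norm_nonneg _)
            exact mul_le_mul (hexp_le x z hx hzn) h1 (norm_nonneg _) (Real.exp_pos _).le
        _ = |R| * Real.exp ((‖z₀‖ + 1) * |R|) * ‖f x‖ := by ring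
  · -- differentiability
    filter_upwards with x z _
    have : HasDerivAt (fun w : ℂ => Complex.exp ((↑(-x) : ℂ) * w))
        (Complex.exp ((↑(-x) : ℂ) * z) * ((↑(-x) : ℂ) * 1)) z :=
      ((hasDerivAt_id z).const_mul ((↑(-x) : ℂ))).cexp
    simpa using this.mul_const (f x)

/-- If `g : [0,∞) → ℂ` is integrable with compact support and its Laplace transform
vanishes at `Z_s = √s/√2 − i √s/√2` for all `s ≥ M₀`, then `g = 0` a.e. on `[0,∞)`. -/
theorem stmt4 (g : ℝ → ℂ) (hg : Integrable g) (hsupp : HasCompactSupport g)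
    (M₀ : ℝ) (hM₀ : 0 < M₀)
    (hvan : ∀ s : ℝ, M₀ ≤ s →
      ∫ r in Ioi (0:ℝ),
        Complex.exp (-(((Real.sqrt s / Real.sqrt 2 : ℝ) : ℂ)
          - Complex.I * ((Real.sqrt s / Real.sqrt 2 : ℝ) : ℂ)) * r) * g r = 0) :
    g =ᵐ[volume.restrict (Ici (0:ℝ))] 0 := by
  classical
  set f : ℝ → ℂ := (Ioi (0:ℝ)).indicator g with hf_def
  have hf_int : Integrable f := hg.indicator measurableSet_Ioi
  have hf_supp : HasCompactSupport f := by
    apply hsupp.mono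
    intro x hx
    simp only [Function.mem_support, hf_def] at *
    contrapose! hx
    simp [Set.indicator_apply, hx]
  obtain ⟨R, hRsub⟩ := hf_supp.isCompact.isBounded.subset_closedBall 0
  have hR : ∀ x, f x ≠ 0 → |x| ≤ R := by
    intro x hx
    have : x ∈ tsupport f := subset_tsupport f (by simpa [Function.mem_support] using hx)
    simpa [Real.dist_eq] using hRsub this
  set F : ℂ → ℂ := fun z => ∫ x : ℝ, Complex.exp ((↑(-x) : ℂ) * z) * f x with hF_def
  have hF_eq : ∀ z : ℂ, F z = ∫ r in Ioi (0:ℝ), Complex.exp (-z * r) * g r := by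
    intro z
    rw [hF_def]
    rw [← integral_indicator measurableSet_Ioi]
    apply integral_congr_ae
    filter_upwards with x
    by_cases hx : x ∈ Ioi (0:ℝ)
    · simp only [hf_def, indicator_of_mem hx]
      congr 1
      push_cast
      ring
    · simp [hf_def, indicator_of_notMem hx]
  have hdiff : Differentiable ℂ F := laplace_differentiable f hf_int R hR
  -- the points where F vanishes
  set zmap : ℝ → ℂ := fun s =>
    ((Real.sqrt s / Real.sqrt 2 : ℝ) : ℂ) - Complex.I * ((Real.sqrt s / Real.sqrt 2 : ℝ) : ℂ)
    with hzmap
  have hFz : ∀ s : ℝ, M₀ ≤ s → F (zmap s) = 0 := by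
    intro s hs
    rw [hF_eq]
    exact hvan s hs
  have htendsto : Tendsto zmap (𝓝[>] M₀) (𝓝[≠] zmap M₀) := by
    rw [tendsto_nhdsWithin_iff]
    constructor
    · apply Tendsto.mono_left _ nhdsWithin_le_nhds
      apply Continuous.tendsto
      fun_prop
    · apply eventually_nhdsWithin_of_forall
      intro s hs h
      have hre := congrArg Complex.re h
      simp only [hzmap, Complex.sub_re, Complex.ofReal_re, Complex.mul_re, Complex.I_re,
        Complex.ofReal_im, Complex.I_im, mul_zero, zero_mul, one_mul, sub_zero, mul_one] at hre
      have h2 : (0:ℝ) < Real.sqrt 2 := Real.sqrt_pos.2 (by norm_num)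
      have : Real.sqrt M₀ < Real.sqrt s := Real.sqrt_lt_sqrt hM₀.le hs
      have h3 : Real.sqrt M₀ / Real.sqrt 2 < Real.sqrt s / Real.sqrt 2 := by
        gcongr
      simp only [mem_compl_iff, mem_singleton_iff] at *
      linarith [hre]
  have hfreq : ∃ᶠ z in 𝓝[≠] zmap M₀, F z = 0 :=
    htendsto.frequently ((eventually_nhdsWithin_of_forall
      (fun s (hs : s ∈ Ioi M₀) => hFz s (le_of_lt hs))).frequently)
  have hF0 : ∀ z : ℂ, F z = 0 := by
    have hanal : AnalyticOnNhd ℂ F univ :=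
      hdiff.differentiableOn.analyticOnNhd isOpen_univ
    intro z
    exact hanal.eqOn_zero_of_preconnected_of_frequently_eq_zero isPreconnected_univ
      (mem_univ (zmap M₀)) hfreq (mem_univ z)
  have h𝓕 : ∀ ξ : ℝ, 𝓕 f ξ = 0 := by
    intro ξ
    rw [Real.fourier_real_eq_integral_exp_smul, ← hF0 ((↑(2 * π * ξ) : ℂ) * Complex.I)]
    apply integral_congr_ae
    filter_upwards with x
    rw [smul_eq_mul]
    congr 1
    push_cast
    ring
  have key : ∀ φ : ℝ → ℝ, ContDiff ℝ ∞ φ → HasCompactSupport φ →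
      ∫ x, φ x • f x = 0 := by
    intro φ hφ1 hφ2
    obtain ⟨Φ, hΦ⟩ := exists_schwartz_of_compact_support φ hφ1 hφ2
    set ψ := (FourierTransform.fourierCLE ℂ 𝓢(ℝ, ℂ)).symm Φ with hψdef
    have hψ : 𝓕 (⇑ψ) = ⇑Φ := by
      rw [← SchwartzMap.fourier_coe, ← FourierTransform.fourierCLE_apply (R := ℂ) (E := 𝓢(ℝ, ℂ)), hψdef,
        (FourierTransform.fourierCLE ℂ 𝓢(ℝ, ℂ)).apply_symm_apply]
    have hψint : Integrable (⇑ψ) := ψ.integrable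
    have hL : (innerₗ ℝ).flip = innerₗ ℝ := by
      apply LinearMap.ext; intro x; apply LinearMap.ext; intro y
      simpa using real_inner_comm x y
    have hflip := VectorFourier.integral_fourierIntegral_smul_eq_flip
      (L := innerₗ ℝ) Real.continuous_fourierChar continuous_inner hf_int hψint
    rw [hL] at hflip
    calc ∫ x, φ x • f x = ∫ x, f x • 𝓕 (⇑ψ) x := by
          apply integral_congr_ae
          filter_upwards with x
          rw [show 𝓕 (⇑ψ) x = Φ x from congrFun hψ x, hΦ x,
            smul_eq_mul, Complex.real_smul, mul_comm]
      _ = ∫ ξ, 𝓕 f ξ • ψ ξ := hflip.symm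
      _ = 0 := by simp [h𝓕]
  have hae : f =ᵐ[volume] 0 :=
    ae_eq_zero_of_integral_contDiff_smul_eq_zero hf_int.locallyIntegrable key
  have hres : volume.restrict (Ici (0:ℝ)) = volume.restrict (Ioi (0:ℝ)) :=
    (Measure.restrict_congr_set Ioi_ae_eq_Ici).symm
  rw [hres]
  have h1 : ∀ᵐ x ∂volume.restrict (Ioi (0:ℝ)), f x = 0 := ae_restrict_of_ae hae
  have h2 : ∀ᵐ x ∂volume.restrict (Ioi (0:ℝ)), x ∈ Ioi (0:ℝ) :=
    ae_restrict_mem measurableSet_Ioi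
  filter_upwards [h1, h2] with x hx1 hx2
  simpa [hf_def, indicator_of_mem hx2] using hx1
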